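/- The coefficients a(n) = [qⁿ] E₁ of E₁ = q(1-6q+11q²-6q³+2q⁴)/(1-9q+27q²-32q³+13q⁴-3q⁵-q⁶) are nonnegative integers for all n, and satisfy a(n) ≥ 4·a(n-1) for all n ≥ 4. -/

import Mathlib

open PowerSeries

private def aa : ℕ → ℤ
  | 0 => 0 | 1 => 1 | 2 => 3 | 3 => 11 | 4 => 44 | 5 => 184
  | (n+6) => 9*aa (n+5) - 27*aa (n+4) + 32*aa (n+3) - 13*aa (n+2) + 3*aa (n+1) + aa n

private lemma ha6 (n : ℕ) : aa (n+6) = 9*aa (n+5) - 27*aa (n+4) + 32*aa (n+3)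
    - 13*aa (n+2) + 3*aa (n+1) + aa n := rfl

private lemma akey (m : ℕ) : aa (m+14) - 4*aa (m+13) =
    3*(aa (m+11) - 4*aa (m+10)) + 118*(aa (m+10) - 4*aa (m+9)) + 5*(aa (m+9) - 4*aa (m+8))
    + (aa (m+8) - 4*aa (m+7)) + 1223*(aa (m+7) - 4*aa (m+6)) + 4311*(aa (m+6) - 4*aa (m+5))
    + 17477*(aa (m+5) - 4*aa (m+4)) + 69967*(aa (m+4) - 4*aa (m+3)) + 279868*aa (m+3) := by
  have h1 : aa (m+14) = 9*aa (m+13) - 27*aa (m+12) + 32*aa (m+11) - 13*aa (m+10) + 3*aa (m+9) + aa (m+8) := ha6 (m+8)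
  have h2 : aa (m+13) = 9*aa (m+12) - 27*aa (m+11) + 32*aa (m+10) - 13*aa (m+9) + 3*aa (m+8) + aa (m+7) := ha6 (m+7)
  have h3 : aa (m+12) = 9*aa (m+11) - 27*aa (m+10) + 32*aa (m+9) - 13*aa (m+8) + 3*aa (m+7) + aa (m+6) := ha6 (m+6)
  have h4 : aa (m+11) = 9*aa (m+10) - 27*aa (m+9) + 32*aa (m+8) - 13*aa (m+7) + 3*aa (m+6) + aa (m+5) := ha6 (m+5)
  have h5 : aa (m+10) = 9*aa (m+9) - 27*aa (m+8) + 32*aa (m+7) - 13*aa (m+6) + 3*aa (m+5) + aa (m+4) := ha6 (m+4)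
  linear_combination h1 + 5*h2 + 18*h3 + 56*h4 + 59*h5

private lemma aa_growth : ∀ n, 0 ≤ aa n ∧ (3 ≤ n → 4 * aa n ≤ aa (n+1)) := by
  intro n
  induction n using Nat.strong_induction_on with
  | _ n ih =>
    by_cases hn : n ≤ 12
    · interval_cases n <;> exact ⟨by decide, fun h => by first | omega | decide⟩
    · push_neg at hn
      obtain ⟨m, rfl⟩ : ∃ m, n = m + 13 := ⟨n - 13, by omega⟩
      have i3 := ih (m+3) (by omega)
      have i4 := ih (m+4) (by omega)
      have i5 := ih (m+5) (by omega)
      have i6 := ih (m+6) (by omega)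
      have i7 := ih (m+7) (by omega)
      have i8 := ih (m+8) (by omega)
      have i9 := ih (m+9) (by omega)
      have i10 := ih (m+10) (by omega)
      have i12 := ih (m+12) (by omega)
      have key := akey m
      have h3 := i3.2 (by omega); have h4 := i4.2 (by omega); have h5 := i5.2 (by omega)
      have h6 := i6.2 (by omega); have h7 := i7.2 (by omega); have h8 := i8.2 (by omega)
      have h9 := i9.2 (by omega); have h10 := i10.2 (by omega); have h12 := i12.2 (by omega)
      have ha3 := i3.1
      exact ⟨by nlinarith [i12.1], fun _ => by nlinarith [i12.1]⟩

/-- The coefficients of the area generating function for level one polyominoes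
with cheesy blocks are nonnegative integers, and satisfy `a(n) ≥ 4·a(n-1)`
for all `n ≥ 4`. -/
theorem level_one_coeffs_nonneg_and_growth
    (E : PowerSeries ℚ)
    (hE : E = (X * (1 - 6*X + 11*X^2 - 6*X^3 + 2*X^4)) *
        (1 - 9*X + 27*X^2 - 32*X^3 + 13*X^4 - 3*X^5 - X^6)⁻¹) :
    (∀ n : ℕ, ∃ k : ℕ, coeff n E = (k : ℚ)) ∧
    (∀ n : ℕ, 4 ≤ n → 4 * coeff (n-1) E ≤ coeff n E) := by
  set Dp : PowerSeries ℚ := 1 - 9*X + 27*X^2 - 32*X^3 + 13*X^4 - 3*X^5 - X^6 with hDp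
  set Np : PowerSeries ℚ := X * (1 - 6*X + 11*X^2 - 6*X^3 + 2*X^4) with hNp
  have hU : constantCoeff Dp ≠ 0 := by
    rw [hDp]
    simp [map_sub, map_add, map_mul, map_pow, constantCoeff_X]
  have hED : E * Dp = Np := by
    rw [hE, mul_assoc, PowerSeries.inv_mul_cancel _ hU, mul_one]
  have hEexp : E = Np + 9*(E*X^1) - 27*(E*X^2) + 32*(E*X^3) - 13*(E*X^4) + 3*(E*X^5) + E*X^6 := by
    linear_combination hED
  have hNc : ∀ n : ℕ, coeff n Np
      = (if n = 1 then 1 else 0) - 6*(if n = 2 then 1 else 0) + 11*(if n = 3 then 1 else 0)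
        - 6*(if n = 4 then 1 else 0) + 2*(if n = 5 then 1 else 0) := by
    intro n
    have h : Np = X^1 - (C 6)*X^2 + (C 11)*X^3 - (C 6)*X^4 + (C 2)*X^5 := by
      rw [hNp,
          show C (6:ℚ) = (6:PowerSeries ℚ) from map_ofNat _ _,
          show C (11:ℚ) = (11:PowerSeries ℚ) from map_ofNat _ _,
          show C (2:ℚ) = (2:PowerSeries ℚ) from map_ofNat _ _]
      ring
    rw [h]
    simp only [map_add, map_sub, coeff_C_mul, coeff_X_pow]
  have hc : ∀ n : ℕ, coeff n E = coeff n Np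
      + 9*(if 1 ≤ n then coeff (n-1) E else 0)
      - 27*(if 2 ≤ n then coeff (n-2) E else 0)
      + 32*(if 3 ≤ n then coeff (n-3) E else 0)
      - 13*(if 4 ≤ n then coeff (n-4) E else 0)
      + 3*(if 5 ≤ n then coeff (n-5) E else 0)
      + (if 6 ≤ n then coeff (n-6) E else 0) := by
    intro n
    conv_lhs => rw [hEexp]
    rw [show (9:PowerSeries ℚ) = C 9 from (map_ofNat _ _).symm,
        show (27:PowerSeries ℚ) = C 27 from (map_ofNat _ _).symm,
        show (32:PowerSeries ℚ) = C 32 from (map_ofNat _ _).symm,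
        show (13:PowerSeries ℚ) = C 13 from (map_ofNat _ _).symm,
        show (3:PowerSeries ℚ) = C 3 from (map_ofNat _ _).symm]
    simp only [map_add, map_sub, coeff_C_mul, coeff_mul_X_pow']
  have hval : ∀ n : ℕ, coeff n E = (aa n : ℚ) := by
    intro n
    induction n using Nat.strong_induction_on with
    | _ n ih =>
      by_cases hn : n ≤ 5
      · have aa0 : aa 0 = 0 := rfl
        have aa1 : aa 1 = 1 := rfl
        have aa2 : aa 2 = 3 := rfl
        have aa3 : aa 3 = 11 := rfl
        have aa4 : aa 4 = 44 := rfl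
        have aa5 : aa 5 = 184 := rfl
        interval_cases n
        · rw [hc, hNc]; norm_num [aa0]
        · rw [hc, hNc]; norm_num [ih 0 (by norm_num), aa0, aa1]
        · rw [hc, hNc]; norm_num [ih 0 (by norm_num), ih 1 (by norm_num), aa0, aa1, aa2]
        · rw [hc, hNc]
          norm_num [ih 0 (by norm_num), ih 1 (by norm_num), ih 2 (by norm_num), aa0, aa1, aa2, aa3]
        · rw [hc, hNc]
          norm_num [ih 0 (by norm_num), ih 1 (by norm_num), ih 2 (by norm_num),
            ih 3 (by norm_num), aa0, aa1, aa2, aa3, aa4]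
        · rw [hc, hNc]
          norm_num [ih 0 (by norm_num), ih 1 (by norm_num), ih 2 (by norm_num),
            ih 3 (by norm_num), ih 4 (by norm_num), aa0, aa1, aa2, aa3, aa4, aa5]
      · push_neg at hn
        obtain ⟨m, rfl⟩ : ∃ m, n = m + 6 := ⟨n - 6, by omega⟩
        rw [hc, hNc]
        have e1 : m+6-1 = m+5 := by omega
        have e2 : m+6-2 = m+4 := by omega
        have e3 : m+6-3 = m+3 := by omega
        have e4 : m+6-4 = m+2 := by omega
        have e5 : m+6-5 = m+1 := by omega
        have e6 : m+6-6 = m := by omega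
        rw [if_pos (by omega : 1 ≤ m+6), if_pos (by omega : 2 ≤ m+6),
            if_pos (by omega : 3 ≤ m+6), if_pos (by omega : 4 ≤ m+6),
            if_pos (by omega : 5 ≤ m+6), if_pos (by omega : 6 ≤ m+6),
            if_neg (by omega : ¬ m+6 = 1), if_neg (by omega : ¬ m+6 = 2),
            if_neg (by omega : ¬ m+6 = 3), if_neg (by omega : ¬ m+6 = 4),
            if_neg (by omega : ¬ m+6 = 5),
            e1, e2, e3, e4, e5, e6,
            ih (m+5) (by omega), ih (m+4) (by omega), ih (m+3) (by omega),
            ih (m+2) (by omega), ih (m+1) (by omega), ih m (by omega), ha6]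
        push_cast
        ring
  constructor
  · intro n
    refine ⟨(aa n).toNat, ?_⟩
    rw [hval n]
    exact_mod_cast (Int.toNat_of_nonneg (aa_growth n).1).symm
  · intro n hn
    obtain ⟨m, rfl⟩ : ∃ m, n = m + 1 := ⟨n - 1, by omega⟩
    rw [show m+1-1 = m from by omega, hval m, hval (m+1)]
    have := (aa_growth m).2 (by omega)
    exact_mod_cast this
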